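/- arXiv:0903.2567 — 2 statements merged into one kernel-verified Lean document; each statement's English description precedes it below -/
import Mathlib

section
/- Let (X,0) be a pointed convex Boolean metric space over a Boolean ring B such that every element of X is a convex combination of 0, x₁,…,xₙ, and suppose that x₁,…,x_s are pairwise orthogonal and nonzero (for some s ≤ n). Then there exist a_{s+1},…,aₙ ∈ B such that the set {x₁,…,x_s, a_{s+1}x_{s+1},…,aₙxₙ} \ {0} is a referential of (X,0). -/
/-- The order on a Boolean ring: `a ≤ b` iff `a * b = a`. -/
def ble {B : Type} [BooleanRing B] (a b : B) : Prop := a * b = a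

/-- The join on a Boolean ring: `a ∨ b = a + b + a * b`. -/
def bjoin {B : Type} [BooleanRing B] (a b : B) : B := a + b + a * b

/-- A Boolean metric space over a Boolean ring `B`: `d x y = 0` iff `x = y`,
`d` is symmetric, and `d x z ≤ d x y ∨ d y z`. -/
structure BooleanMetric (B : Type) [BooleanRing B] (X : Type) where
  d : X → X → B
  d_eq_zero : ∀ x y, d x y = 0 ↔ x = y
  d_symm : ∀ x y, d x y = d y x
  d_tri : ∀ x y z, ble (d x z) (bjoin (d x y) (d y z))

/-- The coefficients `a i` have pairwise zero products. -/
def PairwiseOrthCoeffs {B : Type} [BooleanRing B] {k : ℕ} (a : Fin k → B) : Prop :=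
  ∀ i j, i ≠ j → a i * a j = 0

/-- `x` is a convex combination of `x₁, …, xₖ` with coefficients `a₁, …, aₖ`,
i.e. `aᵢ · d(x, xᵢ) = 0` for all `i`. -/
def IsConvComb {B X : Type} [BooleanRing B] (m : BooleanMetric B X) {k : ℕ}
    (a : Fin k → B) (xs : Fin k → X) (x : X) : Prop :=
  ∀ i, a i * m.d x (xs i) = 0

/-- A subset `S` is convex: every convex combination of points of `S` (with pairwise
disjoint coefficients summing to `1`) exists in `S`. -/
def IsConvexSubspace {B X : Type} [BooleanRing B] (m : BooleanMetric B X) (S : Set X) : Prop :=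
  ∀ (k : ℕ) (a : Fin k → B) (xs : Fin k → X), (∀ i, xs i ∈ S) →
    PairwiseOrthCoeffs a → (∑ i, a i) = 1 → ∃ x ∈ S, IsConvComb m a xs x

/-- A subset `S` is a CFG-space: it is convex and there are finitely many points of `S`
of which every point of `S` is a convex combination. -/
def IsCFGSubspace {B X : Type} [BooleanRing B] (m : BooleanMetric B X) (S : Set X) : Prop :=
  IsConvexSubspace m S ∧
  ∃ (k : ℕ) (xs : Fin k → X), (∀ i, xs i ∈ S) ∧
    ∀ x ∈ S, ∃ a : Fin k → B, PairwiseOrthCoeffs a ∧ (∑ i, a i) = 1 ∧ IsConvComb m a xs x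

/-- A contractive map: `d(f x, f y) ≤ d(x, y)`. -/
def Contractive {B X Y : Type} [BooleanRing B] (mX : BooleanMetric B X) (mY : BooleanMetric B Y)
    (f : X → Y) : Prop :=
  ∀ x y, ble (mY.d (f x) (f y)) (mX.d x y)

/-- `sm a x` is the convex combination `a x + (a+1) 0` of `x` and the base point `z`
with coefficients `a` and `a + 1`. -/
def IsScalarMul {B X : Type} [BooleanRing B] (m : BooleanMetric B X) (z : X)
    (sm : B → X → X) : Prop :=
  ∀ a x, a * m.d (sm a x) x = 0 ∧ (a + 1) * m.d (sm a x) z = 0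

/-- `x ⊥ y`, i.e. `x ⋆ y = (d(x,y)+1) x = 0`. -/
def Orth {B X : Type} [BooleanRing B] (m : BooleanMetric B X) (z : X) (sm : B → X → X)
    (x y : X) : Prop :=
  sm (m.d x y + 1) x = z

/-- `x` is the convex combination of `0, x₁, …, xₖ` with coefficients
`a₀ = 1 + a₁ + ⋯ + aₖ, a₁, …, aₖ`. -/
def ConvCombWithZero {B X : Type} [BooleanRing B] (m : BooleanMetric B X) (z : X) {k : ℕ}
    (a : Fin k → B) (xs : Fin k → X) (x : X) : Prop :=
  PairwiseOrthCoeffs a ∧ (∀ i, a i * m.d x (xs i) = 0) ∧ (1 + ∑ i, a i) * m.d x z = 0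

/-- `x₁, …, xₖ` is a referential of `(X, z)`: the `xᵢ` are nonzero, pairwise orthogonal,
and every point of `X` is a convex combination of `0, x₁, …, xₖ`. -/
def IsReferential {B X : Type} [BooleanRing B] (m : BooleanMetric B X) (z : X)
    (sm : B → X → X) {k : ℕ} (xs : Fin k → X) : Prop :=
  (∀ i, xs i ≠ z) ∧ (∀ i j, i ≠ j → Orth m z sm (xs i) (xs j)) ∧
  ∀ x : X, ∃ a : Fin k → B, ConvCombWithZero m z a xs x

/-- The whole space is a convex closure of the subset `S`: it is convex and every point
is a convex combination of points of `S`. -/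
def IsConvexClosure {B X : Type} [BooleanRing B] (m : BooleanMetric B X) (S : Set X) : Prop :=
  IsConvexSubspace m Set.univ ∧
  ∀ x : X, ∃ (k : ℕ) (a : Fin k → B) (xs : Fin k → X),
    (∀ i, xs i ∈ S) ∧ PairwiseOrthCoeffs a ∧ (∑ i, a i) = 1 ∧ IsConvComb m a xs x

/-- A finite set `R` is a referential of `(X, z)` (set version). -/
def IsReferentialSet {B X : Type} [BooleanRing B] (m : BooleanMetric B X) (z : X)
    (sm : B → X → X) (R : Finset X) : Prop :=
  z ∉ R ∧ (∀ x ∈ R, ∀ y ∈ R, x ≠ y → Orth m z sm x y) ∧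
  ∀ u : X, ∃ a : X → B,
    (∀ x ∈ R, ∀ y ∈ R, x ≠ y → a x * a y = 0) ∧
    (∀ x ∈ R, a x * m.d u x = 0) ∧ (1 + ∑ x ∈ R, a x) * m.d u z = 0

section Basics
variable {B X : Type} [BooleanRing B]

lemma btwo : (2 : B) = 0 := by
  have h := BooleanRing.add_self (1 : B); linear_combination h

lemma compl_mul (u : B) : (u + 1) * u = 0 := by
  linear_combination BooleanRing.mul_one_add_self u

variable (m : BooleanMetric B X) (z : X) (sm : B → X → X)

lemma tri' (x y w : X) : m.d x w * (m.d x y + m.d y w + m.d x y * m.d y w) = m.d x w :=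
  m.d_tri x y w

lemma d_self (x : X) : m.d x x = 0 := (m.d_eq_zero x x).2 rfl

lemma d_congr {c : B} {u x : X} (h : c * m.d u x = 0) (w : X) :
    c * m.d u w = c * m.d x w := by
  have t1 := tri' m u x w
  have t2 := tri' m x u w
  rw [m.d_symm x u] at t2
  linear_combination (-(c : B)) * t1 + c * t2 + m.d u w * h - m.d x w * h

variable (hsm : IsScalarMul m z sm)
include hsm

lemma e_sm (a : B) (x : X) : m.d (sm a x) z = a * m.d x z := by
  obtain ⟨h1, h2⟩ := hsm a x
  have h3 := d_congr m h1 z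
  linear_combination h2 - h3 - a * m.d x z * (btwo (B := B))

lemma sm_unique {c : B} {u : X} (x : X) (h1 : c * m.d u x = 0)
    (h2 : (c + 1) * m.d u z = 0) : u = sm c x := by
  obtain ⟨hv1, hv2⟩ := hsm c x
  have hA : c * m.d u (sm c x) = 0 := by
    have := d_congr m h1 (sm c x)
    rw [m.d_symm x (sm c x)] at this
    linear_combination this + hv1
  have hB : (c + 1) * m.d u (sm c x) = 0 := by
    have h4 := d_congr m h2 (sm c x)
    have h5 := e_sm m z sm hsm c x
    rw [m.d_symm z (sm c x)] at h4
    have h6 : (c + 1) * m.d (sm c x) z = 0 := by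
      rw [h5]; linear_combination m.d x z * compl_mul c
    linear_combination h4 + h6
  have : m.d u (sm c x) = 0 := by
    linear_combination hA + hB - c * m.d u (sm c x) * (btwo (B := B))
  exact (m.d_eq_zero _ _).1 this

lemma sm_one (x : X) : sm 1 x = x := by
  refine (sm_unique m z sm hsm x ?_ ?_).symm
  · rw [d_self]; ring
  · have : (1 : B) + 1 = 0 := BooleanRing.add_self 1
    rw [this, zero_mul]

lemma sm_comp (a b : B) (x : X) : sm a (sm b x) = sm (a * b) x := by
  refine sm_unique m z sm hsm x ?_ ?_
  · obtain ⟨ha1, _⟩ := hsm a (sm b x)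
    obtain ⟨hb1, _⟩ := hsm b x
    have h1 : (a * b) * m.d (sm a (sm b x)) (sm b x) = 0 := by
      linear_combination b * ha1
    have := d_congr m h1 x
    rw [this]
    linear_combination a * hb1
  · have h5 : m.d (sm a (sm b x)) z = a * (b * m.d x z) := by
      rw [e_sm m z sm hsm a (sm b x), e_sm m z sm hsm b x]
    rw [h5]
    linear_combination m.d x z * BooleanRing.mul_one_add_self (a * b)

lemma orth_iff (x y : X) :
    Orth m z sm x y ↔ (m.d x y + 1) * m.d x z = 0 := by
  constructor
  · intro h
    have := (hsm (m.d x y + 1) x).1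
    rw [h, m.d_symm z x] at this
    exact this
  · intro h
    refine (sm_unique m z sm hsm x ?_ ?_).symm
    · rw [m.d_symm z x]; exact h
    · rw [d_self]; ring

lemma orth_symm {x y : X} (h : Orth m z sm x y) : Orth m z sm y x := by
  rw [orth_iff m z sm hsm] at h ⊢
  rw [m.d_symm y x]
  have htri := tri' m y x z
  rw [m.d_symm y x] at htri
  linear_combination htri - m.d y z * h + m.d y z * (btwo (B := B))

end Basics

section Build
variable {B X : Type} [BooleanRing B]
variable (m : BooleanMetric B X) (z : X) (sm : B → X → X)

lemma build (hsm : IsScalarMul m z sm) {n : ℕ} (xs : Fin n → X)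
    (hgen : ∀ x : X, ∃ a : Fin n → B, ConvCombWithZero m z a xs x)
    (s : ℕ)
    (horth : ∀ i j : Fin n, (i : ℕ) < s → (j : ℕ) < s → i ≠ j → Orth m z sm (xs i) (xs j)) :
    ∀ k : ℕ, s ≤ k → k ≤ n → ∃ a : Fin n → B,
      (∀ i j : Fin n, (i : ℕ) < k → (j : ℕ) < k → i ≠ j →
        Orth m z sm (if (i : ℕ) < s then xs i else sm (a i) (xs i))
                    (if (j : ℕ) < s then xs j else sm (a j) (xs j))) ∧
      (∀ u : X, ∃ b : Fin n → B,
        ConvCombWithZero m z b (fun i => if (i : ℕ) < s then xs i else sm (a i) (xs i)) u) := by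
  intro k hk
  induction k, hk using Nat.le_induction with
  | base =>
    intro _hn
    have hg : (fun i : Fin n => if (i : ℕ) < s then xs i else sm 1 (xs i)) = xs := by
      funext i
      split
      · rfl
      · exact sm_one m z sm hsm (xs i)
    refine ⟨fun _ => 1, ?_, ?_⟩
    · intro i j hi hj hij
      rw [if_pos hi, if_pos hj]
      exact horth i j hi hj hij
    · intro u
      obtain ⟨b, hb⟩ := hgen u
      refine ⟨b, ?_⟩
      show ConvCombWithZero m z b (fun i => if (i : ℕ) < s then xs i else sm 1 (xs i)) u
      rw [hg]
      exact hb
  | succ k hk ih =>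
    intro hkn
    obtain ⟨a, Horth, Hgen⟩ := ih (Nat.le_of_succ_le hkn)
    have hkn' : k < n := hkn
    obtain ⟨g, hg⟩ : ∃ g : Fin n → X,
        g = fun i : Fin n => if (i : ℕ) < s then xs i else sm (a i) (xs i) := ⟨_, rfl⟩
    obtain ⟨K, hKval⟩ : ∃ K : Fin n, K = ⟨k, hkn'⟩ := ⟨_, rfl⟩
    have hKk : (K : ℕ) = k := by rw [hKval]
    obtain ⟨x, hx⟩ : ∃ x : X, x = g K := ⟨_, rfl⟩
    obtain ⟨t, ht⟩ : ∃ t : Fin n → B, t = fun i => m.d x z * (m.d x (g i) + 1) := ⟨_, rfl⟩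
    obtain ⟨q, hq⟩ : ∃ q : ℕ → B,
        ∀ r, q r = ∏ i ∈ Finset.univ.filter (fun i : Fin n => (i : ℕ) < r), (t i + 1) :=
      ⟨_, fun _ => rfl⟩
    have hKs : ¬ ((K : ℕ) < s) := by omega
    have hxK : x = sm (a K) (xs K) := by rw [hx, hg]; simp only [if_neg hKs]
    have hneK : ∀ i : Fin n, (i : ℕ) < k → i ≠ K := by
      intro i hik h
      rw [h, hKk] at hik
      exact lt_irrefl _ hik
    have hcq : ∀ (i : Fin n) (r : ℕ), (i : ℕ) < r → t i * q r = 0 := by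
      intro i r hir
      have hmem : i ∈ Finset.univ.filter (fun i : Fin n => (i : ℕ) < r) := by
        simp [hir]
      obtain ⟨w, hw⟩ := Finset.dvd_prod_of_mem (fun i => t i + 1) hmem
      rw [hq r, hw]
      linear_combination w * compl_mul (t i)
    have htel : ∀ r : ℕ, r ≤ n →
        q r + ∑ i ∈ Finset.univ.filter (fun i : Fin n => (i : ℕ) < r), t i * q (i : ℕ) = 1 := by
      intro r
      induction r with
      | zero =>
        intro _
        have h0 : Finset.univ.filter (fun i : Fin n => (i : ℕ) < 0) = ∅ := by
          ext i; simp
        rw [hq 0, h0]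
        simp
      | succ r ihr =>
        intro hrn
        have hrn' : r < n := hrn
        have hR : Finset.univ.filter (fun i : Fin n => (i : ℕ) < r + 1)
            = insert (⟨r, hrn'⟩ : Fin n)
                (Finset.univ.filter (fun i : Fin n => (i : ℕ) < r)) := by
          ext i
          simp only [Finset.mem_filter, Finset.mem_univ, true_and, Finset.mem_insert,
            Fin.ext_iff]
          omega
        have hnotmem : (⟨r, hrn'⟩ : Fin n) ∉
            Finset.univ.filter (fun i : Fin n => (i : ℕ) < r) := by
          simp
        have hqs : q (r + 1) = (t ⟨r, hrn'⟩ + 1) * q r := by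
          rw [hq (r + 1), hq r, hR, Finset.prod_insert hnotmem]
        have hss : ∑ i ∈ Finset.univ.filter (fun i : Fin n => (i : ℕ) < r + 1), t i * q (i : ℕ)
            = t ⟨r, hrn'⟩ * q r
              + ∑ i ∈ Finset.univ.filter (fun i : Fin n => (i : ℕ) < r), t i * q (i : ℕ) := by
          rw [hR, Finset.sum_insert hnotmem]
        have hih := ihr (Nat.le_of_succ_le hrn)
        rw [hqs, hss]
        linear_combination hih + t ⟨r, hrn'⟩ * q r * (btwo (B := B))
    have hdd : ∀ i j : Fin n, (i : ℕ) < (j : ℕ) →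
        (t i * q (i : ℕ)) * (t j * q (j : ℕ)) = 0 := by
      intro i j h
      linear_combination q (i : ℕ) * t j * hcq i (j : ℕ) h
    have hdc : ∀ i : Fin n, (i : ℕ) < k → (t i * q (i : ℕ)) * q k = 0 := by
      intro i h
      linear_combination q (i : ℕ) * hcq i k h
    have horthK : ∀ i : Fin n, (i : ℕ) < k → Orth m z sm (sm (q k) x) (g i) := by
      intro i hik
      rw [orth_iff m z sm hsm]
      have hD := d_congr m (hsm (q k) x).1 (g i)
      have hct := hcq i k hik
      rw [ht] at hct
      simp only at hct
      rw [e_sm m z sm hsm]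
      linear_combination m.d x z * hD + hct
    have hg'ne : ∀ i : Fin n, i ≠ K →
        (if (i : ℕ) < s then xs i else sm (Function.update a K (q k * a K) i) (xs i)) = g i := by
      intro i hi
      rw [Function.update_of_ne hi, hg]
    have hg'K :
        (if (K : ℕ) < s then xs K else sm (Function.update a K (q k * a K) K) (xs K))
          = sm (q k) x := by
      rw [if_neg hKs, Function.update_self, ← sm_comp m z sm hsm, ← hxK]
    refine ⟨Function.update a K (q k * a K), ?_, ?_⟩
    · -- Orth goal
      intro i j hi hj hij
      by_cases hik : (i : ℕ) < k
      · by_cases hjk : (j : ℕ) < k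
        · rw [hg'ne i (hneK i hik), hg'ne j (hneK j hjk), hg]
          exact Horth i j hik hjk hij
        · have hjK : j = K := by
            apply Fin.ext; omega
          rw [hg'ne i (hneK i hik), hjK, hg'K]
          exact orth_symm m z sm hsm (horthK i hik)
      · have hiK : i = K := by
          apply Fin.ext; omega
        by_cases hjk : (j : ℕ) < k
        · rw [hg'ne j (hneK j hjk), hiK, hg'K]
          exact horthK j hjk
        · have hjK : j = K := by
            apply Fin.ext; omega
          exact absurd (hiK.trans hjK.symm) hij
    · -- generation goal
      intro u
      obtain ⟨b, hbo, hbd, hbz⟩ := Hgen u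
      have hbd' : ∀ i : Fin n, b i * m.d u (g i) = 0 := by
        intro i
        rw [hg]
        exact hbd i
      have hbKx : b K * m.d u x = 0 := by
        rw [hx]
        exact hbd' K
      refine ⟨fun i => if (i : ℕ) < k then b i + b K * (t i * q (i : ℕ))
          else if i = K then q k * b K else b i, ?_, ?_, ?_⟩
      · -- pairwise orthogonality of coefficients
        intro i j hij
        dsimp only
        by_cases hik : (i : ℕ) < k <;> by_cases hjk : (j : ℕ) < k
        · rw [if_pos hik, if_pos hjk]
          have e1 := hbo i j hij
          have e2 := hbo i K (hneK i hik)
          have e3 := hbo j K (hneK j hjk)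
          have e4 : (t i * q (i : ℕ)) * (t j * q (j : ℕ)) = 0 := by
            rcases (Fin.val_ne_of_ne hij).lt_or_gt with h | h
            · exact hdd i j h
            · rw [mul_comm]; exact hdd j i h
          linear_combination e1 + (t j * q (j : ℕ)) * e2 + (t i * q (i : ℕ)) * e3
            + (b K * b K) * e4
        · rw [if_pos hik, if_neg hjk]
          have e2 := hbo i K (hneK i hik)
          by_cases hjK : j = K
          · rw [if_pos hjK]
            linear_combination q k * e2 + b K * b K * hdc i hik
          · rw [if_neg hjK]
            linear_combination hbo i j hij + (t i * q (i : ℕ)) * hbo K j (Ne.symm hjK)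
        · rw [if_neg hik, if_pos hjk]
          by_cases hiK : i = K
          · rw [if_pos hiK]
            linear_combination q k * hbo j K (hneK j hjk) + b K * b K * hdc j hjk
          · rw [if_neg hiK]
            linear_combination hbo i j hij + (t j * q (j : ℕ)) * hbo i K hiK
        · rw [if_neg hik, if_neg hjk]
          by_cases hiK : i = K <;> by_cases hjK : j = K
          · exact absurd (hiK.trans hjK.symm) hij
          · rw [if_pos hiK, if_neg hjK]
            linear_combination q k * hbo K j (fun h => hjK (h ▸ hiK ▸ rfl))
          · rw [if_neg hiK, if_pos hjK]
            linear_combination q k * hbo i K hiK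
          · rw [if_neg hiK, if_neg hjK]
            exact hbo i j hij
      · -- convex combination property
        intro i
        dsimp only
        by_cases hik : (i : ℕ) < k
        · rw [if_pos hik, hg'ne i (hneK i hik)]
          have e6 := hbd' i
          have hD2 := d_congr m hbKx (g i)
          have h8 := compl_mul (m.d x (g i))
          rw [ht]
          simp only
          linear_combination e6 + (m.d x z * (m.d x (g i) + 1) * q (i : ℕ)) * hD2
            + (q (i : ℕ) * b K * m.d x z) * h8
        · by_cases hiK : i = K
          · rw [if_neg hik, if_pos hiK, hiK, hg'K]
            have h9 := d_congr m (hsm (q k) x).1 u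
            rw [m.d_symm u (sm (q k) x)]
            have hbKx' : b K * m.d x u = 0 := by
              rw [m.d_symm x u]; exact hbKx
            linear_combination b K * h9 + q k * hbKx'
          · rw [if_neg hik, if_neg hiK, hg'ne i hiK]
            exact hbd' i
      · -- sum condition
        have hpt : ∀ i : Fin n,
            (if (i : ℕ) < k then b i + b K * (t i * q (i : ℕ))
              else if i = K then q k * b K else b i)
            = b i + (if (i : ℕ) < k then b K * (t i * q (i : ℕ))
              else if i = K then q k * b K + b K else 0) := by
          intro i
          by_cases hik : (i : ℕ) < k
          · rw [if_pos hik, if_pos hik]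
          · rw [if_neg hik, if_neg hik]
            by_cases hiK : i = K
            · rw [if_pos hiK, if_pos hiK, hiK]
              linear_combination (-(b K)) * (btwo (B := B))
            · rw [if_neg hiK, if_neg hiK]; ring
        have hsum2 : ∑ i : Fin n, (if (i : ℕ) < k then b K * (t i * q (i : ℕ))
            else if i = K then q k * b K + b K else 0) = 0 := by
          rw [Finset.sum_ite]
          have hfirst : ∑ i ∈ Finset.univ.filter (fun i : Fin n => (i : ℕ) < k),
              b K * (t i * q (i : ℕ))
              = b K * ∑ i ∈ Finset.univ.filter (fun i : Fin n => (i : ℕ) < k),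
                  t i * q (i : ℕ) := by
            rw [Finset.mul_sum]
          have hsecond : ∑ i ∈ Finset.univ.filter (fun i : Fin n => ¬ (i : ℕ) < k),
              (if i = K then q k * b K + b K else 0) = q k * b K + b K := by
            rw [Finset.sum_ite_eq' _ K (fun _ => q k * b K + b K)]
            rw [if_pos]
            simp [hKk]
          rw [hfirst, hsecond]
          have hS := htel k (Nat.le_of_succ_le hkn)
          linear_combination b K * hS + b K * (btwo (B := B))
        dsimp only
        have hsum : ∑ i : Fin n, (if (i : ℕ) < k then b i + b K * (t i * q (i : ℕ))
            else if i = K then q k * b K else b i) = ∑ i : Fin n, b i := by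
          rw [Finset.sum_congr rfl (fun i _ => hpt i), Finset.sum_add_distrib, hsum2,
            add_zero]
        rw [hsum]
        exact hbz
end Build

/-- Construction of referentials: if every point of `X` is a convex combination of
`0, x₁, …, xₙ` and `x₁, …, x_s` are pairwise orthogonal and nonzero, then there are
coefficients `aᵢ` such that `{x₁, …, x_s, a_{s+1}x_{s+1}, …, aₙxₙ} \ {0}` is a
referential of `(X, 0)`. -/
theorem stmt10 {B X : Type} [BooleanRing B] [DecidableEq X] (m : BooleanMetric B X)
    (hconv : IsConvexSubspace m Set.univ) (z : X)
    (sm : B → X → X) (hsm : IsScalarMul m z sm)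
    {n : ℕ} (xs : Fin n → X)
    (hgen : ∀ x : X, ∃ a : Fin n → B, ConvCombWithZero m z a xs x)
    (s : ℕ) (hs : s ≤ n)
    (horth : ∀ i j : Fin n, (i : ℕ) < s → (j : ℕ) < s → i ≠ j → Orth m z sm (xs i) (xs j))
    (hnz : ∀ i : Fin n, (i : ℕ) < s → xs i ≠ z) :
    ∃ a : Fin n → B, IsReferentialSet m z sm
      ((Finset.image (fun i : Fin n => if (i : ℕ) < s then xs i else sm (a i) (xs i))
        Finset.univ).erase z) := by
  obtain ⟨a, Horth, Hgen⟩ := build m z sm hsm xs hgen s horth n hs le_rfl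
  refine ⟨a, Finset.notMem_erase z _, ?_, ?_⟩
  · intro v hv w hw hvw
    rw [Finset.mem_erase, Finset.mem_image] at hv hw
    obtain ⟨-, i, -, hfi⟩ := hv
    obtain ⟨-, j, -, hfj⟩ := hw
    subst hfi hfj
    exact Horth i j i.isLt j.isLt (fun h => hvw (by rw [h]))
  · intro u
    obtain ⟨b, hbo, hbd, hbz⟩ := Hgen u
    have hbd' : ∀ i : Fin n,
        b i * m.d u (if (i : ℕ) < s then xs i else sm (a i) (xs i)) = 0 := hbd
    refine ⟨fun v => ∑ i ∈ Finset.univ.filter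
      (fun i : Fin n => (if (i : ℕ) < s then xs i else sm (a i) (xs i)) = v), b i, ?_, ?_, ?_⟩
    · intro v hv w hw hvw
      rw [Finset.sum_mul_sum]
      refine Finset.sum_eq_zero fun i hi => Finset.sum_eq_zero fun j hj => ?_
      rw [Finset.mem_filter] at hi hj
      refine hbo i j fun h => hvw ?_
      rw [← hi.2, ← hj.2, h]
    · intro v hv
      rw [Finset.sum_mul]
      refine Finset.sum_eq_zero fun i hi => ?_
      rw [Finset.mem_filter] at hi
      rw [← hi.2]
      exact hbd' i
    · have hmaps : ∀ i ∈ Finset.univ.filter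
          (fun i : Fin n => (if (i : ℕ) < s then xs i else sm (a i) (xs i)) ≠ z),
          (if (i : ℕ) < s then xs i else sm (a i) (xs i)) ∈
            ((Finset.image (fun i : Fin n => if (i : ℕ) < s then xs i else sm (a i) (xs i))
              Finset.univ).erase z) := by
        intro i hi
        rw [Finset.mem_filter] at hi
        exact Finset.mem_erase.2 ⟨hi.2,
          Finset.mem_image_of_mem _ (Finset.mem_univ i)⟩
      have key := Finset.sum_fiberwise_of_maps_to hmaps b
      have hRA : ∑ v ∈ ((Finset.image
            (fun i : Fin n => if (i : ℕ) < s then xs i else sm (a i) (xs i))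
            Finset.univ).erase z),
          (∑ i ∈ Finset.univ.filter
            (fun i : Fin n => (if (i : ℕ) < s then xs i else sm (a i) (xs i)) = v), b i)
          = ∑ i ∈ Finset.univ.filter
            (fun i : Fin n => (if (i : ℕ) < s then xs i else sm (a i) (xs i)) ≠ z), b i := by
        rw [← key]
        refine Finset.sum_congr rfl fun v hv => ?_
        rw [Finset.filter_filter]
        refine Finset.sum_congr (Finset.filter_congr fun i _ => ?_) fun _ _ => rfl
        have hvz : v ≠ z := (Finset.mem_erase.1 hv).1
        constructor
        · intro h; exact ⟨h ▸ hvz, h⟩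
        · exact And.right
      have hsplit := Finset.sum_filter_add_sum_filter_not Finset.univ
        (fun i : Fin n => (if (i : ℕ) < s then xs i else sm (a i) (xs i)) ≠ z) b
      have hz2 : (∑ i ∈ Finset.univ.filter
          (fun i : Fin n => ¬ (if (i : ℕ) < s then xs i else sm (a i) (xs i)) ≠ z), b i)
          * m.d u z = 0 := by
        rw [Finset.sum_mul]
        refine Finset.sum_eq_zero fun i hi => ?_
        rw [Finset.mem_filter, not_not] at hi
        have := hbd' i
        rw [hi.2] at this
        exact this
      rw [hRA]
      linear_combination hbz - hz2 + m.d u z * hsplit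
end

section
/- Let X be a CFG-space over a Boolean ring B and Y ⊆ X. Then Y, with the restricted metric, is a CFG-space if and only if there exists a contractive map f : X → B (where B carries the metric d(a,b) = a + b) such that Y = f⁻¹(0). -/
section Helpers
variable {B X : Type} [BooleanRing B]

lemma bsq (a : B) : a * a = a := BooleanRing.mul_self a
lemma b2 (a : B) : a + a = 0 := BooleanRing.add_self a

lemma ble_add' {u v w : B} (h1 : ble u w) (h2 : ble v w) : ble (u + v) w := by
  unfold ble at *; rw [add_mul, h1, h2]

lemma ble_mul' {u w : B} (v : B) (h : ble u w) : ble (v * u) w := by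
  unfold ble at *; rw [mul_assoc, h]

lemma dist_contr (m : BooleanMetric B X) (z x y : X) :
    ble (m.d x z + m.d y z) (m.d x y) := by
  have t1 := m.d_tri x y z
  have t2 := m.d_tri y x z
  unfold ble bjoin at *
  rw [m.d_symm y x] at t2
  have h2 : (m.d x z * m.d y z + m.d x z * m.d y z * m.d x y)
      + (m.d x z * m.d y z + m.d x z * m.d y z * m.d x y) = 0 := b2 _
  linear_combination t1 + t2 - h2

lemma prod_contr (m : BooleanMetric B X) {ι : Type} [DecidableEq ι] (s : Finset ι)
    (ys : ι → X) (x y : X) :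
    ble ((∏ i ∈ s, m.d x (ys i)) + ∏ i ∈ s, m.d y (ys i)) (m.d x y) := by
  induction s using Finset.induction with
  | empty =>
      simp only [Finset.prod_empty]
      unfold ble
      rw [b2, zero_mul]
  | insert a s ha ih =>
      rw [Finset.prod_insert ha, Finset.prod_insert ha]
      have key : m.d x (ys a) * ∏ i ∈ s, m.d x (ys i)
          + m.d y (ys a) * ∏ i ∈ s, m.d y (ys i)
          = m.d x (ys a) * ((∏ i ∈ s, m.d x (ys i)) + ∏ i ∈ s, m.d y (ys i))
            + (∏ i ∈ s, m.d y (ys i)) * (m.d x (ys a) + m.d y (ys a)) := by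
        linear_combination -b2 (m.d x (ys a) * ∏ i ∈ s, m.d y (ys i))
      rw [key]
      exact ble_add' (ble_mul' _ ih) (ble_mul' _ (dist_contr m (ys a) x y))

lemma greedy_sum (g : ℕ → B) (n : ℕ) :
    ∑ i ∈ Finset.range n, (∏ j ∈ Finset.range i, g j) * (1 + g i)
      = 1 + ∏ j ∈ Finset.range n, g j := by
  induction n with
  | zero => simp; exact (b2 1).symm
  | succ n ih =>
      rw [Finset.sum_range_succ, ih, Finset.prod_range_succ]
      linear_combination b2 (∏ j ∈ Finset.range n, g j)

lemma greedy_orth (g : ℕ → B) {i j : ℕ} (hij : i < j) :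
    ((∏ t ∈ Finset.range i, g t) * (1 + g i))
      * ((∏ t ∈ Finset.range j, g t) * (1 + g j)) = 0 := by
  obtain ⟨e, he⟩ : g i ∣ ∏ t ∈ Finset.range j, g t :=
    Finset.dvd_prod_of_mem g (Finset.mem_range.mpr hij)
  rw [he]
  have hgi : (1 + g i) * g i = 0 := by linear_combination bsq (g i) + b2 (g i)
  linear_combination ((∏ t ∈ Finset.range i, g t) * e * (1 + g j)) * hgi

lemma pinch (m : BooleanMetric B X) {a : B} {x y p : X}
    (h1 : a * m.d x y = 0) (h2 : a * m.d y p = 0) : a * m.d x p = 0 := by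
  have t := m.d_tri x y p
  unfold ble bjoin at t
  linear_combination (-a) * t + m.d x p * h1 + (m.d x p + m.d x p * m.d x y) * h2

end Helpers

/-- A subset `Y` of a CFG-space `X` is a CFG-space iff it is the zero set of a
contractive map `f : X → B`, where `B` carries the metric `d(a,b) = a + b`. -/
theorem stmt14 {B X : Type} [BooleanRing B] (m : BooleanMetric B X)
    (hX : IsCFGSubspace m Set.univ) (Y : Set X) :
    IsCFGSubspace m Y ↔
    ∃ f : X → B, (∀ x y, ble (f x + f y) (m.d x y)) ∧ Y = f ⁻¹' {0} := by
  constructor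
  · rintro ⟨hconv, k, ys, hysY, hgen⟩
    refine ⟨fun x => ∏ i, m.d x (ys i), fun x y => prod_contr m Finset.univ ys x y, ?_⟩
    ext x
    simp only [Set.mem_preimage, Set.mem_singleton_iff]
    constructor
    · intro hxY
      obtain ⟨a, horth, hsum, hcc⟩ := hgen x hxY
      have hrw : ∏ i, m.d x (ys i) = ∑ i, a i * ∏ j, m.d x (ys j) := by
        rw [← Finset.sum_mul, hsum, one_mul]
      rw [hrw]
      apply Finset.sum_eq_zero
      intro i _
      obtain ⟨e, he⟩ : m.d x (ys i) ∣ ∏ j, m.d x (ys j) :=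
        Finset.dvd_prod_of_mem _ (Finset.mem_univ i)
      rw [he]
      linear_combination e * (hcc i)
    · intro hfx
      -- greedy coefficients
      set ys' : ℕ → X := fun j => if h : j < k then ys ⟨j, h⟩ else x with hys'
      set g : ℕ → B := fun j => m.d x (ys' j) with hg
      set a : Fin k → B :=
        fun i => (∏ t ∈ Finset.range i.val, g t) * (1 + g i.val) with ha
      have hgval : ∀ i : Fin k, g i.val = m.d x (ys i) := by
        intro i
        simp [hg, hys', i.isLt]
      have horth : PairwiseOrthCoeffs a := by
        intro i j hij
        rcases lt_trichotomy i.val j.val with h | h | h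
        · exact greedy_orth g h
        · exact absurd (Fin.ext h) hij
        · rw [mul_comm]; exact greedy_orth g h
      have hsum : (∑ i, a i) = 1 := by
        have h1 : (∑ i, a i)
            = ∑ i ∈ Finset.range k, (∏ t ∈ Finset.range i, g t) * (1 + g i) :=
          Fin.sum_univ_eq_sum_range (fun n => (∏ t ∈ Finset.range n, g t) * (1 + g n)) k
        have h2 : (∏ j ∈ Finset.range k, g j) = ∏ i, m.d x (ys i) := by
          rw [← Fin.prod_univ_eq_prod_range g k]
          exact Finset.prod_congr rfl fun i _ => hgval i
        rw [h1, greedy_sum, h2, hfx, add_zero]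
      have hag : ∀ i : Fin k, a i * m.d x (ys i) = 0 := by
        intro i
        rw [← hgval i, ha]
        linear_combination (∏ t ∈ Finset.range i.val, g t) * bsq (g i.val)
          + (∏ t ∈ Finset.range i.val, g t) * b2 (g i.val)
      obtain ⟨p, hpY, hpc⟩ := hconv k a ys hysY horth hsum
      have hxp : m.d x p = 0 := by
        have h1 : m.d x p = ∑ i, a i * m.d x p := by
          rw [← Finset.sum_mul, hsum, one_mul]
        rw [h1]
        apply Finset.sum_eq_zero
        intro i _
        have h2 : a i * m.d (ys i) p = 0 := by
          rw [m.d_symm]; exact hpc i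
        exact pinch m (hag i) h2
      rw [(m.d_eq_zero x p).mp hxp]
      exact hpY
  · rintro ⟨f, hf, rfl⟩
    obtain ⟨hXconv, k, xs, -, hXgen⟩ := hX
    constructor
    · intro n a zs hzs horth hsum
      obtain ⟨x, -, hcc⟩ := hXconv n a zs (fun i => Set.mem_univ _) horth hsum
      refine ⟨x, ?_, hcc⟩
      simp only [Set.mem_preimage, Set.mem_singleton_iff]
      have h1 : f x = ∑ i, a i * f x := by rw [← Finset.sum_mul, hsum, one_mul]
      rw [h1]
      apply Finset.sum_eq_zero
      intro i _
      have hA := hf x (zs i)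
      unfold ble at hA
      have hz : f (zs i) = 0 := hzs i
      rw [hz, add_zero] at hA
      linear_combination f x * (hcc i) - a i * hA
    · by_cases hY : ∃ y₀, y₀ ∈ f ⁻¹' ({0} : Set B)
      · obtain ⟨y₀, hy₀⟩ := hY
        have hy₀0 : f y₀ = 0 := hy₀
        have H : ∀ i : Fin k, ∃ y,
            (1 + f (xs i)) * m.d y (xs i) = 0 ∧ f (xs i) * m.d y y₀ = 0 := by
          intro i
          have horth2 : PairwiseOrthCoeffs ![1 + f (xs i), f (xs i)] := by
            intro s t hst
            fin_cases s <;> fin_cases t <;> simp_all <;>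
              linear_combination bsq (f (xs i)) + b2 (f (xs i))
          have hsum2 : (∑ t, (![1 + f (xs i), f (xs i)]) t) = 1 := by
            rw [Fin.sum_univ_two]
            simp only [Matrix.cons_val_zero, Matrix.cons_val_one, Matrix.head_cons]
            linear_combination b2 (f (xs i))
          obtain ⟨y, -, hcc⟩ := hXconv 2 ![1 + f (xs i), f (xs i)] ![xs i, y₀]
            (fun t => Set.mem_univ _) horth2 hsum2
          refine ⟨y, ?_, ?_⟩
          · have := hcc 0; simpa using this
          · have := hcc 1; simpa using this
        choose ys hys1 hys2 using H
        have hysY : ∀ i, f (ys i) = 0 := by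
          intro i
          have hA := hf (ys i) (xs i)
          unfold ble at hA
          have hB := hf (ys i) y₀
          unfold ble at hB
          rw [hy₀0, add_zero] at hB
          -- e1 : (1 + c) * (f (ys i) + c) = 0
          have e1 : (1 + f (xs i)) * (f (ys i) + f (xs i)) = 0 := by
            linear_combination (f (ys i) + f (xs i)) * (hys1 i)
              - (1 + f (xs i)) * hA
          have e2 : f (ys i) = f (xs i) * f (ys i) := by
            linear_combination e1 - b2 (f (xs i) * f (ys i))
              - bsq (f (xs i)) - b2 (f (xs i))
          have e3 : f (xs i) * f (ys i) = 0 := by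
            linear_combination f (ys i) * (hys2 i) - f (xs i) * hB
          rw [e2, e3]
        refine ⟨k, ys, hysY, ?_⟩
        intro y hy
        have hy0 : f y = 0 := hy
        obtain ⟨a, horth, hsum, hcc⟩ := hXgen y (Set.mem_univ _)
        refine ⟨a, horth, hsum, ?_⟩
        intro i
        have hcu : f (xs i) * m.d y (xs i) = f (xs i) := by
          have hA := hf y (xs i)
          unfold ble at hA
          rw [hy0, zero_add] at hA
          exact hA
        have hac : a i * f (xs i) = 0 := by
          linear_combination f (xs i) * (hcc i) - a i * hcu
        have h2 : a i * m.d (xs i) (ys i) = 0 := by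
          have hw : (1 + f (xs i)) * m.d (xs i) (ys i) = 0 := by
            rw [m.d_symm]; exact hys1 i
          linear_combination a i * hw - m.d (xs i) (ys i) * hac
        exact pinch m (hcc i) h2
      · refine ⟨0, Fin.elim0, fun i => i.elim0, fun y hy => absurd ⟨y, hy⟩ hY⟩
end
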